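/- Let F : ℝ^d → ℝ be (L₀,L₁)-smooth with L₁ > 0, and let x, x⁺ ∈ ℝ^d satisfy ‖x⁺ - x‖ ≤ min{1/L₁, 1}. Then ‖∇F(x⁺)‖ ≤ 4(L₀/L₁ + ‖∇F(x)‖). -/

import Mathlib

open Real Set

/-- For (L₀,L₁)-smooth F and ‖x⁺ - x‖ ≤ min{1/L₁, 1}:
    ‖∇F(x⁺)‖ ≤ 4(L₀/L₁ + ‖∇F(x)‖). -/
theorem stmt_14 (d : ℕ) (L0 L1 : ℝ) (hL0 : 0 < L0) (hL1 : 0 < L1)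
    (F : EuclideanSpace ℝ (Fin d) → ℝ) (hF : ContDiff ℝ 2 F)
    (hsmooth : ∀ y : EuclideanSpace ℝ (Fin d),
      ‖fderiv ℝ (gradient F) y‖ ≤ L0 + L1 * ‖gradient F y‖)
    (x xp : EuclideanSpace ℝ (Fin d)) (hstep : ‖xp - x‖ ≤ min (1 / L1) 1) :
    ‖gradient F xp‖ ≤ 4 * (L0 / L1 + ‖gradient F x‖) := by
  set v := xp - x with hv
  by_cases hv0 : v = 0
  · have : xp = x := by
      have := sub_eq_zero.mp hv0
      exact this
    rw [this]
    have h1 : 0 ≤ L0 / L1 := le_of_lt (div_pos hL0 hL1)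
    have h7 : (0:ℝ) ≤ ‖gradient F x‖ := norm_nonneg _
    linarith
  -- gradient F is differentiable
  have hgrad_eq : gradient F = fun y =>
      (InnerProductSpace.toDual ℝ (EuclideanSpace ℝ (Fin d))).symm (fderiv ℝ F y) := rfl
  have hfd : ContDiff ℝ 1 (fderiv ℝ F) := by
    have h2 : (2 : WithTop ℕ∞) = 1 + 1 := by norm_num
    exact ((contDiff_succ_iff_fderiv).mp (h2 ▸ hF)).2.2
  have hgdiff : Differentiable ℝ (gradient F) := by
    rw [hgrad_eq]
    exact (InnerProductSpace.toDual ℝ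
      (EuclideanSpace ℝ (Fin d))).symm.toContinuousLinearEquiv.differentiable.comp
      (hfd.differentiable one_ne_zero)
  set r := ‖v‖ with hr
  have hrpos : 0 < r := norm_pos_iff.mpr hv0
  have hr1 : L1 * r ≤ 1 := by
    have : r ≤ 1 / L1 := le_trans hstep (min_le_left _ _)
    calc L1 * r ≤ L1 * (1 / L1) := by nlinarith
    _ = 1 := by field_simp
  set K := L1 * r with hK
  have hKpos : 0 < K := mul_pos hL1 hrpos
  set f : ℝ → EuclideanSpace ℝ (Fin d) := fun t => gradient F (x + t • v) with hf
  set f' : ℝ → EuclideanSpace ℝ (Fin d) := fun t => fderiv ℝ (gradient F) (x + t • v) v with hf'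
  have hderiv : ∀ t : ℝ, HasDerivAt f (f' t) t := by
    intro t
    have hγ : HasDerivAt (fun s : ℝ => x + s • v) v t := by
      simpa using ((hasDerivAt_id t).smul_const v).const_add x
    exact (hgdiff (x + t • v)).hasFDerivAt.comp_hasDerivAt t hγ
  have hbound : ∀ t ∈ Ico (0:ℝ) 1, ‖f' t‖ ≤ K * ‖f t‖ + L0 * r := by
    intro t _
    calc ‖f' t‖ ≤ ‖fderiv ℝ (gradient F) (x + t • v)‖ * ‖v‖ :=
          (fderiv ℝ (gradient F) (x + t • v)).le_opNorm v
      _ ≤ (L0 + L1 * ‖f t‖) * r := by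
          apply mul_le_mul_of_nonneg_right (hsmooth _) (norm_nonneg v)
      _ = K * ‖f t‖ + L0 * r := by ring
  have hgron := norm_le_gronwallBound_of_norm_deriv_right_le
    (f := f) (f' := f') (δ := ‖f 0‖) (K := K) (ε := L0 * r) (a := 0) (b := 1)
    (fun t _ => ((hderiv t).continuousAt).continuousWithinAt)
    (fun t _ => (hderiv t).hasDerivWithinAt)
    le_rfl hbound 1 (by norm_num)
  have hf1 : f 1 = gradient F xp := by simp [hf, hv]
  have hf0 : f 0 = gradient F x := by simp [hf]
  rw [gronwallBound_of_K_ne_0 (ne_of_gt hKpos)] at hgron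
  simp only [hf1, hf0] at hgron
  have hεK : L0 * r / K = L0 / L1 := by
    rw [hK]; field_simp
  rw [hεK] at hgron
  have hexp : exp (K * (1 - 0)) ≤ exp 1 := by
    apply exp_le_exp.mpr; linarith
  have he : exp 1 ≤ 3 := by
    have := Real.exp_one_lt_d9
    linarith
  have h3 : exp (K * (1 - 0)) ≤ 3 := le_trans hexp he
  have h4 : (0:ℝ) < exp (K * (1 - 0)) := exp_pos _
  have hq : 0 ≤ L0 / L1 := le_of_lt (div_pos hL0 hL1)
  have h5 : ‖gradient F x‖ * rexp (K * (1 - 0)) ≤ ‖gradient F x‖ * 3 :=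
    mul_le_mul_of_nonneg_left h3 (norm_nonneg _)
  have h6 : L0 / L1 * (rexp (K * (1 - 0)) - 1) ≤ L0 / L1 * 2 :=
    mul_le_mul_of_nonneg_left (by linarith) hq
  have h7 : (0:ℝ) ≤ ‖gradient F x‖ := norm_nonneg _
  have key : ∀ B q E : ℝ, 0 ≤ B → 0 ≤ q → B * E ≤ B * 3 → q * (E - 1) ≤ q * 2 →
      B * E + q * (E - 1) ≤ 4 * (q + B) := by
    intro B q E hB hq' k5 k6; linarith
  exact le_trans hgron (key _ _ _ h7 hq h5 h6)
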